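/- If a graph G has the strong parity property, then G is connected and has minimum degree at least 2. -/

import Mathlib

open scoped Classical

def StrongParityProperty {V : Type*} [Fintype V] (G : SimpleGraph V) : Prop :=
  ∀ X : Finset V, Even X.card →
    ∃ F : SimpleGraph V, F ≤ G ∧ (∀ v : V, 1 ≤ F.degree v) ∧
      (∀ v ∈ X, Odd (F.degree v)) ∧ (∀ v ∉ X, Even (F.degree v))

/-- The subgraph of `F` consisting of edges within the component of `u`. -/
private def compGraph {V : Type*} (F : SimpleGraph V) (u : V) : SimpleGraph V where
  Adj a b := F.Adj a b ∧ F.Reachable u a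
  symm := by
    constructor; rintro a b ⟨hab, hua⟩
    exact ⟨hab.symm, hua.trans hab.reachable⟩
  loopless := by constructor; rintro a ⟨hab, -⟩; exact F.loopless.irrefl a hab

private lemma compGraph_degree {V : Type*} [Fintype V] (F : SimpleGraph V) (u a : V) :
    (compGraph F u).degree a = if F.Reachable u a then F.degree a else 0 := by
  classical
  by_cases hr : F.Reachable u a
  · simp only [hr, if_true]
    unfold SimpleGraph.degree
    congr 1
    ext b
    rw [SimpleGraph.mem_neighborFinset, SimpleGraph.mem_neighborFinset]; simp [compGraph, hr]
  · simp only [hr, if_false]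
    rw [SimpleGraph.degree]
    rw [Finset.card_eq_zero]
    ext b
    rw [SimpleGraph.mem_neighborFinset]; simp [compGraph, hr]

theorem strong_parity_connected_min_degree {V : Type*} [Fintype V] (G : SimpleGraph V)
    (hcard : 2 ≤ Fintype.card V) (h : StrongParityProperty G) :
    G.Connected ∧ ∀ v : V, 2 ≤ G.degree v := by
  classical
  have hne : Nonempty V := Fintype.card_pos_iff.mp (by omega)
  have hdegle : ∀ (F : SimpleGraph V), F ≤ G → ∀ v, F.degree v ≤ G.degree v := by
    intro F hFle v
    apply Finset.card_le_card
    intro w hw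
    rw [SimpleGraph.mem_neighborFinset] at *
    exact hFle hw
  have hdeg : ∀ v, 2 ≤ G.degree v := by
    obtain ⟨F0, hF0le, hF0deg, -, hF0even⟩ := h ∅ (by simp)
    intro v
    have h1 := hF0deg v
    obtain ⟨k, hk⟩ := hF0even v (by simp)
    have := hdegle F0 hF0le v
    omega
  refine ⟨?_, hdeg⟩
  rw [SimpleGraph.connected_iff]
  refine ⟨fun u v => ?_, hne⟩
  by_cases huv : u = v
  · subst huv; exact SimpleGraph.Reachable.refl u
  obtain ⟨F, hFle, hFdeg, hFodd, hFeven⟩ := h {u, v} (by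
    rw [Finset.card_insert_of_notMem (by simp [huv]), Finset.card_singleton]; exact ⟨1, rfl⟩)
  suffices hFr : F.Reachable u v from hFr.mono hFle
  by_contra hr
  have key := (compGraph F u).even_card_odd_degree_vertices
  have hfil : (Finset.univ.filter fun a => Odd ((compGraph F u).degree a)) = {u} := by
    ext a
    simp only [Finset.mem_filter, Finset.mem_univ, true_and, Finset.mem_singleton,
      compGraph_degree]
    constructor
    · intro ha
      by_cases hra : F.Reachable u a
      · rw [if_pos hra] at ha
        by_cases haX : a ∈ ({u, v} : Finset V)
        · rcases Finset.mem_insert.mp haX with h1 | h2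
          · exact h1
          · exact absurd hra (by rw [Finset.mem_singleton.mp h2]; exact hr)
        · exact absurd ha (by simpa using hFeven a haX)
      · rw [if_neg hra] at ha; simp at ha
    · intro ha
      rw [ha, if_pos (SimpleGraph.Reachable.refl u)]
      exact hFodd u (by simp)
  
  rw [hfil] at key
  simp at key
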